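/- arXiv:2206.02172 — 2 statements merged into one kernel-verified Lean document; each statement's English description precedes it below -/
import Mathlib

section
/- Let f₁, …, f_n and g₁, …, g_m be holomorphic on a connected open U ⊆ ℂ. If Σᵢ |fᵢ(s)|² = Σⱼ |gⱼ(s)|² for all s ∈ U, then the polarized identity Σᵢ fᵢ(s) · conj(fᵢ(t̄)) = Σⱼ gⱼ(s) · conj(gⱼ(t̄)) holds for all s ∈ U and t in the conjugate domain, whenever both sides extend holomorphically. -/
open Complex
open scoped NNReal ENNReal

private lemma conj_comp_hasDerivAt {h : ℂ → ℂ} {z h' : ℂ} (hh : HasDerivAt h h' z) :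
    HasDerivAt (fun t => starRingEnd ℂ (h (starRingEnd ℂ t))) (starRingEnd ℂ h')
      (starRingEnd ℂ z) := by
  have hconj : ∀ w : ℂ, HasFDerivAt (fun t : ℂ => starRingEnd ℂ t)
      (conjCLE.toContinuousLinearMap : ℂ →L[ℝ] ℂ) w := by
    intro w
    have := conjCLE.hasFDerivAt (x := w)
    exact this.congr_of_eventuallyEq (Filter.Eventually.of_forall fun x => (conjCLE_apply x).symm)
  have hR : HasFDerivAt h ((ContinuousLinearMap.smulRight (1 : ℂ →L[ℂ] ℂ) h').restrictScalars ℝ)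
      (starRingEnd ℂ (starRingEnd ℂ z)) := by
    rw [Complex.conj_conj]
    exact (hasDerivAt_iff_hasFDerivAt.mp hh).restrictScalars ℝ
  have h2 := hR.comp (starRingEnd ℂ z) (hconj (starRingEnd ℂ z))
  have h3 := (hconj _).comp (starRingEnd ℂ z) h2
  rw [hasDerivAt_iff_hasFDerivAt]
  refine hasFDerivAt_of_restrictScalars (𝕜 := ℝ) h3 ?_
  ext v
  simp [ContinuousLinearMap.smulRight_apply, conjCLE_apply, mul_comm]

private lemma conj_comp_deriv {U : Set ℂ} (hU : IsOpen U) {h : ℂ → ℂ}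
    (hh : AnalyticOnNhd ℂ h U) {t : ℂ} (ht : starRingEnd ℂ t ∈ U) :
    HasDerivAt (fun x => starRingEnd ℂ (h (starRingEnd ℂ x)))
      (starRingEnd ℂ (deriv h (starRingEnd ℂ t))) t := by
  have := conj_comp_hasDerivAt ((hh _ ht).differentiableAt.hasDerivAt)
  simpa [Complex.conj_conj] using this

private lemma conj_comp_iteratedDeriv {U : Set ℂ} (hU : IsOpen U) {h : ℂ → ℂ}
    (hh : AnalyticOnNhd ℂ h U) (l : ℕ) :
    ∀ t, starRingEnd ℂ t ∈ U →
      iteratedDeriv l (fun x => starRingEnd ℂ (h (starRingEnd ℂ x))) t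
        = starRingEnd ℂ (iteratedDeriv l h (starRingEnd ℂ t)) := by
  induction l with
  | zero => simp
  | succ l ih =>
    intro t ht
    have hV : IsOpen {x : ℂ | starRingEnd ℂ x ∈ U} := hU.preimage continuous_conj
    have hda : AnalyticOnNhd ℂ (iteratedDeriv l h) U := by
      rw [iteratedDeriv_eq_iterate]; exact hh.iterated_deriv l
    rw [iteratedDeriv_succ, iteratedDeriv_succ]
    have heq : Set.EqOn (iteratedDeriv l fun x => starRingEnd ℂ (h (starRingEnd ℂ x)))
        (fun x => starRingEnd ℂ (iteratedDeriv l h (starRingEnd ℂ x)))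
        {x : ℂ | starRingEnd ℂ x ∈ U} := fun x hx => ih x hx
    rw [Filter.EventuallyEq.deriv_eq (heq.eventuallyEq_of_mem (hV.mem_nhds ht))]
    exact (conj_comp_deriv hU hda ht).deriv

private lemma wirtinger_step {U : Set ℂ} (hU : IsOpen U) {n m : ℕ}
    {f h : Fin n → ℂ → ℂ} {g k : Fin m → ℂ → ℂ}
    (hf : ∀ i, AnalyticOnNhd ℂ (f i) U) (hh : ∀ i, AnalyticOnNhd ℂ (h i) U)
    (hg : ∀ j, AnalyticOnNhd ℂ (g j) U) (hk : ∀ j, AnalyticOnNhd ℂ (k j) U)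
    (heq : ∀ s ∈ U, ∑ i, f i s * starRingEnd ℂ (h i s) = ∑ j, g j s * starRingEnd ℂ (k j s)) :
    ∀ s ∈ U, ∑ i, f i s * starRingEnd ℂ (deriv (h i) s)
           = ∑ j, g j s * starRingEnd ℂ (deriv (k j) s) := by
  intro s hs
  -- building blocks
  have conjD : ∀ (b : ℂ → ℂ), AnalyticOnNhd ℂ b U → HasFDerivAt (fun z => starRingEnd ℂ (b z))
      (conjCLE.toContinuousLinearMap.comp
        ((ContinuousLinearMap.smulRight (1 : ℂ →L[ℂ] ℂ) (deriv b s)).restrictScalars ℝ)) s := by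
    intro b hb
    have hb' : HasFDerivAt b ((ContinuousLinearMap.smulRight (1 : ℂ →L[ℂ] ℂ)
        (deriv b s)).restrictScalars ℝ) s :=
      (hasDerivAt_iff_hasFDerivAt.mp (hb s hs).differentiableAt.hasDerivAt).restrictScalars ℝ
    have hc : HasFDerivAt (fun t : ℂ => starRingEnd ℂ t)
        (conjCLE.toContinuousLinearMap : ℂ →L[ℝ] ℂ) (b s) := by
      have := conjCLE.hasFDerivAt (x := b s)
      exact this.congr_of_eventuallyEq (Filter.Eventually.of_forall fun x => (conjCLE_apply x).symm)
    exact hc.comp s hb'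
  have fD : ∀ (a : ℂ → ℂ), AnalyticOnNhd ℂ a U → HasFDerivAt a
      ((ContinuousLinearMap.smulRight (1 : ℂ →L[ℂ] ℂ) (deriv a s)).restrictScalars ℝ) s :=
    fun a ha => (hasDerivAt_iff_hasFDerivAt.mp (ha s hs).differentiableAt.hasDerivAt).restrictScalars ℝ
  -- derivative CLM of a product term
  let D : (ℂ → ℂ) → (ℂ → ℂ) → (ℂ →L[ℝ] ℂ) := fun a b =>
    a s • (conjCLE.toContinuousLinearMap.comp
        ((ContinuousLinearMap.smulRight (1 : ℂ →L[ℂ] ℂ) (deriv b s)).restrictScalars ℝ))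
      + (starRingEnd ℂ (b s)) • ((ContinuousLinearMap.smulRight (1 : ℂ →L[ℂ] ℂ) (deriv a s)).restrictScalars ℝ)
  have hterm : ∀ (a b : ℂ → ℂ), AnalyticOnNhd ℂ a U → AnalyticOnNhd ℂ b U →
      HasFDerivAt (fun z => a z * starRingEnd ℂ (b z)) (D a b) s :=
    fun a b ha hb => (fD a ha).mul (conjD b hb)
  have Hu : HasFDerivAt (fun z => ∑ i, f i z * starRingEnd ℂ (h i z)) (∑ i, D (f i) (h i)) s :=
    HasFDerivAt.fun_sum fun i _ => hterm _ _ (hf i) (hh i)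
  have Hv : HasFDerivAt (fun z => ∑ j, g j z * starRingEnd ℂ (k j z)) (∑ j, D (g j) (k j)) s :=
    HasFDerivAt.fun_sum fun j _ => hterm _ _ (hg j) (hk j)
  have hne : (fun z => ∑ i, f i z * starRingEnd ℂ (h i z))
      =ᶠ[nhds s] (fun z => ∑ j, g j z * starRingEnd ℂ (k j z)) :=
    Filter.eventuallyEq_of_mem (hU.mem_nhds hs) fun x hx => heq x hx
  have Hu' : HasFDerivAt (fun z => ∑ j, g j z * starRingEnd ℂ (k j z)) (∑ i, D (f i) (h i)) s :=
    Hu.congr_of_eventuallyEq hne.symm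
  have HDeq : (∑ i, D (f i) (h i)) = (∑ j, D (g j) (k j)) := Hu'.unique Hv
  have e1 := DFunLike.congr_fun HDeq (1 : ℂ)
  have eI := DFunLike.congr_fun HDeq (Complex.I)
  simp [D, conjCLE_apply, Complex.conj_I] at e1 eI
  have L : ∀ (N : ℕ) (p q r t : Fin N → ℂ),
      (∑ x, (-(p x * (Complex.I * q x)) + r x * (Complex.I * t x)))
        = -Complex.I * (∑ x, p x * q x) + Complex.I * (∑ x, r x * t x) := by
    intro N p q r t
    rw [Finset.mul_sum, Finset.mul_sum, ← Finset.sum_add_distrib]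
    exact Finset.sum_congr rfl fun x _ => by ring
  have e1' : (∑ i, f i s * starRingEnd ℂ (deriv (h i) s))
        + (∑ i, starRingEnd ℂ (h i s) * deriv (f i) s)
      = (∑ j, g j s * starRingEnd ℂ (deriv (k j) s))
        + (∑ j, starRingEnd ℂ (k j s) * deriv (g j) s) := by
    rw [← Finset.sum_add_distrib, ← Finset.sum_add_distrib]; exact e1
  have eI' : -Complex.I * (∑ i, f i s * starRingEnd ℂ (deriv (h i) s))
        + Complex.I * (∑ i, starRingEnd ℂ (h i s) * deriv (f i) s)
      = -Complex.I * (∑ j, g j s * starRingEnd ℂ (deriv (k j) s))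
        + Complex.I * (∑ j, starRingEnd ℂ (k j s) * deriv (g j) s) := by
    rw [← L, ← L]; exact eI
  set Bf := ∑ i, f i s * starRingEnd ℂ (deriv (h i) s) with hBf
  set Af := ∑ i, starRingEnd ℂ (h i s) * deriv (f i) s with hAf
  set Bg := ∑ j, g j s * starRingEnd ℂ (deriv (k j) s) with hBg
  set Ag := ∑ j, starRingEnd ℂ (k j s) * deriv (g j) s with hAg
  linear_combination e1'/2 + (Complex.I/2) * eI' + ((Bf - Af - Bg + Ag)/2) * Complex.I_sq

theorem stmt_6 (U : Set ℂ) (hU : IsOpen U) (hUc : IsConnected U)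
    (n m : ℕ) (f : Fin n → ℂ → ℂ) (g : Fin m → ℂ → ℂ)
    (hf : ∀ i, DifferentiableOn ℂ (f i) U) (hg : ∀ j, DifferentiableOn ℂ (g j) U)
    (hsum : ∀ s ∈ U, ∑ i, ‖f i s‖ ^ 2 = ∑ j, ‖g j s‖ ^ 2) :
    ∀ s ∈ U, ∀ t : ℂ, starRingEnd ℂ t ∈ U →
      ∑ i, f i s * starRingEnd ℂ (f i (starRingEnd ℂ t)) =
      ∑ j, g j s * starRingEnd ℂ (g j (starRingEnd ℂ t)) := by
  intro s hs t ht
  have hfa : ∀ i, AnalyticOnNhd ℂ (f i) U := fun i => (hf i).analyticOnNhd hU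
  have hga : ∀ j, AnalyticOnNhd ℂ (g j) U := fun j => (hg j).analyticOnNhd hU
  -- base identity in ℂ
  have habs : ∀ z : ℂ, z * starRingEnd ℂ z = ((‖z‖ : ℝ) : ℂ) ^ 2 := by
    intro z
    rw [Complex.mul_conj, Complex.normSq_eq_norm_sq]
    push_cast
    ring
  have hbase : ∀ s ∈ U, ∑ i, f i s * starRingEnd ℂ (f i s)
      = ∑ j, g j s * starRingEnd ℂ (g j s) := by
    intro s hs
    have h1 : ∑ i, f i s * starRingEnd ℂ (f i s) = ((∑ i, ‖f i s‖ ^ 2 : ℝ) : ℂ) := by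
      push_cast
      exact Finset.sum_congr rfl fun i _ => habs _
    have h2 : ∑ j, g j s * starRingEnd ℂ (g j s) = ((∑ j, ‖g j s‖ ^ 2 : ℝ) : ℂ) := by
      push_cast
      exact Finset.sum_congr rfl fun j _ => habs _
    rw [h1, h2, hsum s hs]
  -- key: polarized identity with iterated derivatives in the second slot
  have key : ∀ l : ℕ, ∀ s ∈ U,
      ∑ i, f i s * starRingEnd ℂ (iteratedDeriv l (f i) s)
        = ∑ j, g j s * starRingEnd ℂ (iteratedDeriv l (g j) s) := by
    intro l
    induction l with
    | zero => simpa [iteratedDeriv_zero] using hbase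
    | succ l ih =>
      have hfl : ∀ i, AnalyticOnNhd ℂ (iteratedDeriv l (f i)) U := fun i => by
        rw [iteratedDeriv_eq_iterate]; exact (hfa i).iterated_deriv l
      have hgl : ∀ j, AnalyticOnNhd ℂ (iteratedDeriv l (g j)) U := fun j => by
        rw [iteratedDeriv_eq_iterate]; exact (hga j).iterated_deriv l
      have := wirtinger_step hU hfa hfl hga hgl ih
      intro s hs
      simpa [iteratedDeriv_succ] using this s hs
  -- the conjugate domain
  set V : Set ℂ := {x : ℂ | starRingEnd ℂ x ∈ U} with hVdef
  have hVopen : IsOpen V := hU.preimage continuous_conj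
  have himage : (fun z => starRingEnd ℂ z) '' U = V := by
    ext x
    constructor
    · rintro ⟨y, hy, rfl⟩
      simp only [hVdef, Set.mem_setOf_eq, Complex.conj_conj]
      exact hy
    · intro hx
      exact ⟨starRingEnd ℂ x, hx, Complex.conj_conj x⟩
  have hVconn : IsPreconnected V := by
    rw [← himage]
    exact (hUc.image _ continuous_conj.continuousOn).isPreconnected
  set z₀ : ℂ := starRingEnd ℂ s with hz₀def
  have hz₀ : z₀ ∈ V := by
    simp only [hVdef, Set.mem_setOf_eq, hz₀def, Complex.conj_conj]
    exact hs
  have hz0conj : starRingEnd ℂ z₀ = s := Complex.conj_conj s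
  -- the two functions of t
  set Φ : ℂ → ℂ := fun x => ∑ i, f i s * starRingEnd ℂ (f i (starRingEnd ℂ x)) with hΦdef
  set Ψ : ℂ → ℂ := fun x => ∑ j, g j s * starRingEnd ℂ (g j (starRingEnd ℂ x)) with hΨdef
  have hFdiff : ∀ i, DifferentiableOn ℂ (fun x => starRingEnd ℂ (f i (starRingEnd ℂ x))) V :=
    fun i x hx => ((conj_comp_deriv hU (hfa i) hx).differentiableAt).differentiableWithinAt
  have hGdiff : ∀ j, DifferentiableOn ℂ (fun x => starRingEnd ℂ (g j (starRingEnd ℂ x))) V :=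
    fun j x hx => ((conj_comp_deriv hU (hga j) hx).differentiableAt).differentiableWithinAt
  have hΦa : AnalyticOnNhd ℂ Φ V :=
    (DifferentiableOn.fun_sum fun i _ => (hFdiff i).const_mul _).analyticOnNhd hVopen
  have hΨa : AnalyticOnNhd ℂ Ψ V :=
    (DifferentiableOn.fun_sum fun j _ => (hGdiff j).const_mul _).analyticOnNhd hVopen
  -- local equality near z₀ via power series
  obtain ⟨ε, hε, hball⟩ := Metric.isOpen_iff.mp hVopen z₀ hz₀
  set R : ℝ≥0 := ⟨ε / 2, (half_pos hε).le⟩ with hRdef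
  have hR0 : 0 < R := NNReal.coe_pos.mp (show (0:ℝ) < (R:ℝ) from half_pos hε)
  have hcb : Metric.closedBall z₀ (R : ℝ) ⊆ V :=
    (Metric.closedBall_subset_ball (show (R:ℝ) < ε from half_lt_self hε)).trans hball
  have hEq : ∀ y : ℂ, y ∈ Metric.eball (0 : ℂ) (R : ENNReal) → Φ (z₀ + y) = Ψ (z₀ + y) := by
    intro y hy
    have hsF : ∀ i : Fin n, HasSum
        (fun l => f i s * ((Nat.factorial l : ℂ)⁻¹ * y ^ l * starRingEnd ℂ (iteratedDeriv l (f i) s)))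
        (f i s * starRingEnd ℂ (f i (starRingEnd ℂ (z₀ + y)))) := by
      intro i
      have hps := ((hFdiff i).mono hcb).hasFPowerSeriesOnBall hR0
      have h0 := hps.hasSum_iteratedFDeriv hy
      have hterm : (fun l => (Nat.factorial l : ℂ)⁻¹ •
          iteratedFDeriv ℂ l (fun x => starRingEnd ℂ (f i (starRingEnd ℂ x))) z₀ fun _ => y)
          = fun l => (Nat.factorial l : ℂ)⁻¹ * y ^ l * starRingEnd ℂ (iteratedDeriv l (f i) s) := by
        funext l
        rw [iteratedFDeriv_apply_eq_iteratedDeriv_mul_prod,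
          conj_comp_iteratedDeriv hU (hfa i) l z₀ (by rwa [hz0conj]), hz0conj]
        simp [smul_eq_mul]
        ring
      rw [hterm] at h0
      exact h0.mul_left _
    have hsG : ∀ j : Fin m, HasSum
        (fun l => g j s * ((Nat.factorial l : ℂ)⁻¹ * y ^ l * starRingEnd ℂ (iteratedDeriv l (g j) s)))
        (g j s * starRingEnd ℂ (g j (starRingEnd ℂ (z₀ + y)))) := by
      intro j
      have hps := ((hGdiff j).mono hcb).hasFPowerSeriesOnBall hR0
      have h0 := hps.hasSum_iteratedFDeriv hy
      have hterm : (fun l => (Nat.factorial l : ℂ)⁻¹ •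
          iteratedFDeriv ℂ l (fun x => starRingEnd ℂ (g j (starRingEnd ℂ x))) z₀ fun _ => y)
          = fun l => (Nat.factorial l : ℂ)⁻¹ * y ^ l * starRingEnd ℂ (iteratedDeriv l (g j) s) := by
        funext l
        rw [iteratedFDeriv_apply_eq_iteratedDeriv_mul_prod,
          conj_comp_iteratedDeriv hU (hga j) l z₀ (by rwa [hz0conj]), hz0conj]
        simp [smul_eq_mul]
        ring
      rw [hterm] at h0
      exact h0.mul_left _
    have HF : HasSum
        (fun l => ∑ i, f i s * ((Nat.factorial l : ℂ)⁻¹ * y ^ l * starRingEnd ℂ (iteratedDeriv l (f i) s)))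
        (Φ (z₀ + y)) := hasSum_sum fun i _ => hsF i
    have HG : HasSum
        (fun l => ∑ j, g j s * ((Nat.factorial l : ℂ)⁻¹ * y ^ l * starRingEnd ℂ (iteratedDeriv l (g j) s)))
        (Ψ (z₀ + y)) := hasSum_sum fun j _ => hsG j
    have hsame : (fun l => ∑ i, f i s *
          ((Nat.factorial l : ℂ)⁻¹ * y ^ l * starRingEnd ℂ (iteratedDeriv l (f i) s)))
        = fun l => ∑ j, g j s *
          ((Nat.factorial l : ℂ)⁻¹ * y ^ l * starRingEnd ℂ (iteratedDeriv l (g j) s)) := by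
      funext l
      calc ∑ i, f i s * ((Nat.factorial l : ℂ)⁻¹ * y ^ l * starRingEnd ℂ (iteratedDeriv l (f i) s))
          = (Nat.factorial l : ℂ)⁻¹ * y ^ l * ∑ i, f i s * starRingEnd ℂ (iteratedDeriv l (f i) s) := by
            rw [Finset.mul_sum]; exact Finset.sum_congr rfl fun i _ => by ring
        _ = (Nat.factorial l : ℂ)⁻¹ * y ^ l * ∑ j, g j s * starRingEnd ℂ (iteratedDeriv l (g j) s) := by
            rw [key l s hs]
        _ = ∑ j, g j s * ((Nat.factorial l : ℂ)⁻¹ * y ^ l * starRingEnd ℂ (iteratedDeriv l (g j) s)) := by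
            rw [Finset.mul_sum]; exact Finset.sum_congr rfl fun j _ => by ring
    rw [hsame] at HF
    exact HF.unique HG
  have hloc : Φ =ᶠ[nhds z₀] Ψ := by
    have hmem : Metric.eball z₀ (R : ENNReal) ∈ nhds z₀ :=
      EMetric.ball_mem_nhds _ (by exact_mod_cast hR0)
    filter_upwards [hmem] with x hx
    have hy : x - z₀ ∈ Metric.eball (0 : ℂ) (R : ENNReal) := by
      rw [EMetric.mem_ball] at hx ⊢
      simpa [edist_dist, dist_eq_norm] using hx
    simpa using hEq (x - z₀) hy
  have heqon : Set.EqOn Φ Ψ V :=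
    hΦa.eqOn_of_preconnected_of_eventuallyEq hΨa hVconn hz₀ hloc
  exact heqon ht
end

section
/- Polarized disc version: suppose F(s,t) and g(s), h(t) are holomorphic with |g(s)h(t)| < 1 on U × V ⊆ ℂ², F(s,t) = −μ log(1 − g(s)h(t)) on U × V, and F(s,t) = Σᵢ fᵢ(s) kᵢ(t) is a finite sum of products of holomorphic functions. If μ ≠ 0 then g or h is constant. -/
open Complex

theorem stmt_15 (U V : Set ℂ) (hU : IsOpen U) (hUc : IsConnected U)
    (hV : IsOpen V) (hVc : IsConnected V)
    (g h : ℂ → ℂ) (hg : DifferentiableOn ℂ g U) (hh : DifferentiableOn ℂ h V)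
    (n : ℕ) (f k : Fin n → ℂ → ℂ)
    (hf : ∀ i, DifferentiableOn ℂ (f i) U) (hk : ∀ i, DifferentiableOn ℂ (k i) V)
    (hlt : ∀ s ∈ U, ∀ t ∈ V, ‖g s * h t‖ < 1)
    (μ : ℝ) (hμ : μ ≠ 0)
    (hiso : ∀ s ∈ U, ∀ t ∈ V,
      ∑ i, f i s * k i t = -(μ : ℂ) * Complex.log (1 - g s * h t)) :
    (∃ c : ℂ, ∀ s ∈ U, g s = c) ∨ (∃ c : ℂ, ∀ t ∈ V, h t = c) := by
  by_contra hcon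
  push_neg at hcon
  obtain ⟨hgc, hhc⟩ := hcon
  -- h '' V minus {0} is infinite
  obtain ⟨t₀, ht₀⟩ := hVc.nonempty
  obtain ⟨t₁, ht₁, ht₁ne⟩ := hhc (h t₀)
  have hhVinf : ((h '' V) \ {0}).Infinite := by
    have hpre : IsPreconnected (h '' V) :=
      hVc.isPreconnected.image h hh.continuousOn
    have hnt : (h '' V).Nontrivial :=
      ⟨h t₁, Set.mem_image_of_mem h ht₁, h t₀, Set.mem_image_of_mem h ht₀, ht₁ne⟩
    exact (hpre.infinite_of_nontrivial hnt).diff (Set.finite_singleton 0)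
  -- choose n+1 distinct nonzero values in h '' V
  set e : ℕ ↪ ((h '' V) \ {0} : Set ℂ) := hhVinf.natEmbedding _
  set w : Fin (n + 1) → ℂ := fun j => (e (j : ℕ) : ℂ) with hw
  have hwmem : ∀ j, w j ∈ (h '' V) \ {0} := fun j => (e (j : ℕ)).2
  have hwne : ∀ j, w j ≠ 0 := fun j => (hwmem j).2
  have hwinj : Function.Injective w := by
    intro a b hab
    have := e.injective (Subtype.ext hab)
    exact Fin.val_injective this
  choose t htV htw using fun j => (hwmem j).1
  -- linear dependence of the n+1 vectors (k i (t j))_i in ℂ^n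
  have hnli : ¬ LinearIndependent ℂ (fun j : Fin (n + 1) => fun i : Fin n => k i (t j)) := by
    intro hli
    have hle := hli.fintype_card_le_finrank
    simp [Module.finrank_fin_fun] at hle
  obtain ⟨c, hcsum, j₀, hj₀⟩ := Fintype.not_linearIndependent_iff.mp hnli
  have hcsum' : ∀ i : Fin n, ∑ j, c j * k i (t j) = 0 := by
    intro i
    have := congr_fun hcsum i
    simpa [Finset.sum_apply] using this
  -- key identity: ψ (g s) = 0 for s ∈ U
  set ψ : ℂ → ℂ := fun z => ∑ j, c j * Complex.log (1 - z * w j) with hψ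
  have hkey : ∀ s ∈ U, ψ (g s) = 0 := by
    intro s hs
    have h1 : ∑ j, c j * (-(μ : ℂ) * Complex.log (1 - g s * w j)) = 0 := by
      calc ∑ j, c j * (-(μ : ℂ) * Complex.log (1 - g s * w j))
          = ∑ j, c j * ∑ i, f i s * k i (t j) := by
            refine Finset.sum_congr rfl fun j _ => ?_
            rw [← htw j, ← hiso s hs (t j) (htV j)]
        _ = ∑ i, f i s * ∑ j, c j * k i (t j) := by
            simp_rw [Finset.mul_sum]
            rw [Finset.sum_comm]
            exact Finset.sum_congr rfl fun i _ =>
              Finset.sum_congr rfl fun j _ => by ring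
        _ = 0 := by simp [hcsum']
    have h2 : -(μ : ℂ) * ψ (g s) = 0 := by
      rw [hψ, Finset.mul_sum]
      rw [← h1]
      exact Finset.sum_congr rfl fun j _ => by ring
    have hμ' : -(μ : ℂ) ≠ 0 := by
      simp [Complex.ofReal_ne_zero, hμ]
    exact (mul_eq_zero.mp h2).resolve_left hμ'
  -- open mapping theorem: g '' U is open (or g constant)
  have hgan : AnalyticOnNhd ℂ g U := hg.analyticOnNhd hU
  rcases hgan.is_constant_or_isOpen hUc.isPreconnected with hconst | hopen
  · obtain ⟨cg, hcg⟩ := hconst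
    obtain ⟨s, hsU, hsne⟩ := hgc cg
    exact hsne (hcg s hsU)
  have hΩ : IsOpen (g '' U) := hopen U Set.Subset.rfl hU
  -- norms: for z ∈ g '' U, ‖z * w j‖ < 1
  have hznorm : ∀ z ∈ g '' U, ∀ j, ‖z * w j‖ < 1 := by
    rintro z ⟨s, hs, rfl⟩ j
    rw [← htw j]
    exact hlt s hs (t j) (htV j)
  have hslit : ∀ z : ℂ, ‖z‖ < 1 → (1 - z) ∈ Complex.slitPlane := by
    intro z hz
    refine Complex.mem_slitPlane_iff.mpr (Or.inl ?_)
    have : z.re ≤ ‖z‖ := Complex.re_le_norm z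
    simp only [Complex.sub_re, Complex.one_re]
    linarith
  have hne1 : ∀ z : ℂ, ‖z‖ < 1 → (1 - z) ≠ 0 :=
    fun z hz => Complex.slitPlane_ne_zero (hslit z hz)
  -- derivative of ψ
  have hasD : ∀ z : ℂ, (∀ j, ‖z * w j‖ < 1) →
      HasDerivAt ψ (∑ j, c j * (-(w j) / (1 - z * w j))) z := by
    intro z hz
    apply HasDerivAt.fun_sum
    intro j _
    have hinner : HasDerivAt (fun z : ℂ => 1 - z * w j) (-(w j)) z := by
      simpa using ((hasDerivAt_id z).mul_const (w j)).const_sub 1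
    exact (hinner.clog (hslit _ (hz j))).const_mul (c j)
  -- deriv ψ = 0 on g '' U
  have hD0 : ∀ z ∈ g '' U, ∑ j, c j * (-(w j) / (1 - z * w j)) = 0 := by
    intro z hz
    have hev : ψ =ᶠ[nhds z] fun _ => 0 := by
      filter_upwards [hΩ.mem_nhds hz] with x hx
      obtain ⟨s, hs, rfl⟩ := hx
      exact hkey s hs
    have := hev.deriv_eq
    rw [(hasD z (hznorm z hz)).deriv] at this
    simpa using this
  -- the  polynomial-like function P
  set P : ℂ → ℂ :=
    fun z => ∑ j, c j * w j * ∏ l ∈ Finset.univ.erase j, (1 - z * w l) with hP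
  have hPdiff : Differentiable ℂ P := by
    apply Differentiable.fun_sum
    intro j _
    apply Differentiable.const_mul
    apply Differentiable.fun_finsetProd
    intro l _
    exact ((differentiable_fun_id.mul_const (w l)).const_sub 1)
  have hP0 : ∀ z ∈ g '' U, P z = 0 := by
    intro z hz
    have hD := hD0 z hz
    have hzn := hznorm z hz
    simp only [hP]
    have : ∀ j : Fin (n + 1),
        c j * w j * ∏ l ∈ Finset.univ.erase j, (1 - z * w l)
          = (c j * (-(w j) / (1 - z * w j))) * (-(∏ l, (1 - z * w l))) := by
      intro j
      have hprod : (1 - z * w j) * ∏ l ∈ Finset.univ.erase j, (1 - z * w l)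
          = ∏ l, (1 - z * w l) :=
        Finset.mul_prod_erase Finset.univ (fun l => 1 - z * w l) (Finset.mem_univ j)
      have hd : (1 - z * w j) ≠ 0 := hne1 _ (hzn j)
      rw [← hprod, ← mul_div_assoc, div_mul_eq_mul_div, eq_div_iff hd]
      ring
    rw [Finset.sum_congr rfl fun j _ => this j, ← Finset.sum_mul, hD, zero_mul]
  -- identity theorem: P = 0 everywhere
  obtain ⟨s₀, hs₀⟩ := hUc.nonempty
  have hPzero : ∀ z : ℂ, P z = 0 := by
    have han : AnalyticOnNhd ℂ P Set.univ :=
      hPdiff.differentiableOn.analyticOnNhd isOpen_univ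
    have hev : P =ᶠ[nhds (g s₀)] 0 := by
      filter_upwards [hΩ.mem_nhds (Set.mem_image_of_mem g hs₀)] with x hx
      exact hP0 x hx
    intro z
    exact han.eqOn_zero_of_preconnected_of_eventuallyEq_zero isPreconnected_univ
      (Set.mem_univ (g s₀)) hev (Set.mem_univ z)
  -- evaluate at (w j₀)⁻¹ to get c j₀ = 0
  have hval := hPzero (w j₀)⁻¹
  simp only [hP] at hval
  rw [Finset.sum_eq_single j₀] at hval
  · have hprodne : (∏ l ∈ Finset.univ.erase j₀, (1 - (w j₀)⁻¹ * w l)) ≠ 0 := by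
      rw [Finset.prod_ne_zero_iff]
      intro l hl
      have hlne : l ≠ j₀ := Finset.ne_of_mem_erase hl
      intro hzero
      have : (w j₀)⁻¹ * w l = 1 := by linear_combination -hzero
      have : w l = w j₀ := by
        field_simp [hwne j₀] at this
        exact this
      exact hlne (hwinj this)
    have := mul_eq_zero.mp hval
    rcases this with h' | h'
    · rcases mul_eq_zero.mp h' with h'' | h''
      · exact hj₀ h''
      · exact hwne j₀ h''
    · exact hprodne h'
  · intro j _ hjne
    have hj₀mem : j₀ ∈ Finset.univ.erase j := Finset.mem_erase.mpr ⟨fun hjj => hjne hjj.symm, Finset.mem_univ j₀⟩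
    have : (1 - (w j₀)⁻¹ * w j₀) = 0 := by
      rw [inv_mul_cancel₀ (hwne j₀)]; ring
    rw [Finset.prod_eq_zero hj₀mem this, mul_zero]
  · intro hj; exact absurd (Finset.mem_univ j₀) hj
end
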